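/- Let G be a graph with no 2-factor and (A,B) a biased barrier of G. If H is a component of G − (A ∪ B) with e(H,B) even, then e(H,B) = 0. -/

import Mathlib

open SimpleGraph

variable {V : Type*}

/-- The number of (ordered) pairs giving edges between `X` and `Y`;
for disjoint `X`, `Y` this is the number of edges between `X` and `Y`. -/
noncomputable def eB (G : SimpleGraph V) (X Y : Set V) : ℕ :=
  Set.ncard {p : V × V | p.1 ∈ X ∧ p.2 ∈ Y ∧ G.Adj p.1 p.2}

/-- The vertex set (in `V`) of a connected component of the induced subgraph on `U`. -/
def compSupp (G : SimpleGraph V) (U : Set V)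
    (C : (G.induce U).ConnectedComponent) : Set V :=
  Subtype.val '' C.supp

/-- `δ(A,B) = 2|A| - 2|B| + ∑_{v ∈ B} d_{G-A}(v) - o(A,B)`, where `o(A,B)` is the
number of components of `G - (A ∪ B)` sending an odd number of edges to `B`. -/
noncomputable def deltaAB (G : SimpleGraph V) (A B : Set V) : ℤ :=
  2 * A.ncard - 2 * B.ncard + eB G B Aᶜ -
    Nat.card {C : (G.induce (A ∪ B)ᶜ).ConnectedComponent //
      Odd (eB G (compSupp G (A ∪ B)ᶜ C) B)}

/-- A barrier (Tutte pair) of `G`. -/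
def IsBarrier (G : SimpleGraph V) (A B : Set V) : Prop :=
  Disjoint A B ∧ deltaAB G A B ≤ -2

/-- A biased barrier: a barrier maximizing `|A|` and, subject to that, minimizing `|B|`. -/
def IsBiasedBarrier (G : SimpleGraph V) (A B : Set V) : Prop :=
  IsBarrier G A B ∧
    ∀ A' B' : Set V, IsBarrier G A' B' →
      A'.ncard ≤ A.ncard ∧ (A'.ncard = A.ncard → B.ncard ≤ B'.ncard)

/-- A `2`-factor is a `2`-regular spanning subgraph. -/
def HasTwoFactor (G : SimpleGraph V) : Prop :=
  ∃ H : SimpleGraph V, H ≤ G ∧ ∀ v : V, (H.neighborSet v).ncard = 2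

/-- The number of components of `G - S`. -/
noncomputable def numComp (G : SimpleGraph V) (S : Set V) : ℕ :=
  Nat.card ((G.induce Sᶜ).ConnectedComponent)

/-- `G` is `t`-tough: every vertex cut `S` satisfies `|S| ≥ t · c(G - S)`. -/
def Tough (t : ℝ) (G : SimpleGraph V) : Prop :=
  ∀ S : Set V, 2 ≤ numComp G S → t * (numComp G S : ℝ) ≤ (S.ncard : ℝ)

/-- The toughness `τ(G) = min_S |S| / c(G - S)` over vertex cuts `S`. -/
noncomputable def toughness (G : SimpleGraph V) : ℝ :=
  sInf {r : ℝ | ∃ S : Set V, 2 ≤ numComp G S ∧ r = (S.ncard : ℝ) / (numComp G S : ℝ)}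

/-- `G` is `k`-connected. -/
def KConnected (k : ℕ) (G : SimpleGraph V) : Prop :=
  k < Nat.card V ∧ ∀ S : Set V, S.ncard < k → (G.induce Sᶜ).Connected

/-- The independence number `α(G)`. -/
noncomputable def indepNum (G : SimpleGraph V) : ℕ :=
  sSup {n : ℕ | ∃ s : Set V, (∀ u ∈ s, ∀ v ∈ s, ¬ G.Adj u v) ∧ s.ncard = n}

/-- The minimum degree `δ(G)`. -/
noncomputable def minDeg (G : SimpleGraph V) : ℕ :=
  sInf {d : ℕ | ∃ v : V, (G.neighborSet v).ncard = d}

/-- `H` occurs as an induced subgraph of `G`. -/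
def IsInducedCopy {W : Type*} (H : SimpleGraph W) (G : SimpleGraph V) : Prop :=
  ∃ f : W ↪ V, ∀ a b : W, G.Adj (f a) (f b) ↔ H.Adj a b

/-- The disjoint union `P_m ∪ k·P_1` of a path on `m` vertices and `k` isolated vertices. -/
def pathUnion (m k : ℕ) : SimpleGraph (Fin m ⊕ Fin k) where
  Adj a b := ∃ i j : Fin m, a = Sum.inl i ∧ b = Sum.inl j ∧ (pathGraph m).Adj i j
  symm := ⟨by rintro a b ⟨i, j, rfl, rfl, h⟩; exact ⟨j, i, rfl, rfl, h.symm⟩⟩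
  loopless := ⟨by
    rintro a ⟨i, j, rfl, hj, h⟩
    obtain rfl := Sum.inl.inj hj
    exact (pathGraph m).loopless.irrefl i h⟩

/-- The join `G ∨ H` of two graphs. -/
def joinG {α β : Type*} (G : SimpleGraph α) (H : SimpleGraph β) :
    SimpleGraph (α ⊕ β) where
  Adj x y :=
    match x, y with
    | Sum.inl a, Sum.inl b => G.Adj a b
    | Sum.inr a, Sum.inr b => H.Adj a b
    | _, _ => True
  symm := ⟨by rintro (a | a) (b | b) h <;> simp_all <;> exact h.symm⟩
  loopless := ⟨by rintro (a | a) h <;> simp_all⟩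

/-- `a` disjoint copies of the complete graph `K_b`. -/
def cliquesG (a b : ℕ) : SimpleGraph (Fin a × Fin b) where
  Adj p q := p.1 = q.1 ∧ p.2 ≠ q.2
  symm := ⟨by rintro p q ⟨h1, h2⟩; exact ⟨h1.symm, h2.symm⟩⟩
  loopless := ⟨by rintro p ⟨_, h⟩; exact h rfl⟩

/-- The graph `H_n`: `K_n ∨ (K̄_{2n+1} ∪ K_{2n+1})` together with a perfect matching
between the independent part and the clique part. -/
def Hgraph (n : ℕ) :
    SimpleGraph (Fin n ⊕ (Fin (2 * n + 1) ⊕ Fin (2 * n + 1))) where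
  Adj x y := x ≠ y ∧
    match x, y with
    | Sum.inl _, _ => True
    | _, Sum.inl _ => True
    | Sum.inr (Sum.inl _), Sum.inr (Sum.inl _) => False
    | Sum.inr (Sum.inr _), Sum.inr (Sum.inr _) => True
    | Sum.inr (Sum.inl i), Sum.inr (Sum.inr j) => i = j
    | Sum.inr (Sum.inr i), Sum.inr (Sum.inl j) => i = j
  symm := ⟨by
    rintro (a | a | a) (b | b | b) ⟨hne, h⟩ <;>
      exact ⟨Ne.symm hne, by simp_all⟩⟩
  loopless := ⟨by rintro x ⟨hne, _⟩; exact hne rfl⟩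



section Helpers
variable (G : SimpleGraph V)

lemma eB_swap (X Y : Set V) : eB G X Y = eB G Y X := by
  unfold eB
  have himg : {p : V × V | p.1 ∈ Y ∧ p.2 ∈ X ∧ G.Adj p.1 p.2}
      = Prod.swap '' {p : V × V | p.1 ∈ X ∧ p.2 ∈ Y ∧ G.Adj p.1 p.2} := by
    ext ⟨a, b⟩
    simp only [Set.mem_image, Set.mem_setOf_eq, Prod.exists]
    constructor
    · rintro ⟨ha, hb, hadj⟩; exact ⟨b, a, ⟨hb, ha, hadj.symm⟩, rfl⟩
    · rintro ⟨x, y, ⟨hx, hy, hadj⟩, heq⟩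
      obtain ⟨rfl, rfl⟩ : y = a ∧ x = b := by simpa [Prod.ext_iff, and_comm] using heq
      exact ⟨hy, hx, hadj.symm⟩
  rw [himg, Set.ncard_image_of_injective _ Prod.swap_injective]

lemma eB_empty (Y : Set V) : eB G ∅ Y = 0 := by
  have : {p : V × V | p.1 ∈ (∅ : Set V) ∧ p.2 ∈ Y ∧ G.Adj p.1 p.2} = ∅ := by ext p; simp
  rw [eB, this, Set.ncard_empty]

variable [Fintype V]

lemma eB_union_left {X₁ X₂ : Set V} (h : Disjoint X₁ X₂) (Y : Set V) :
    eB G (X₁ ∪ X₂) Y = eB G X₁ Y + eB G X₂ Y := by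
  unfold eB
  have hset : {p : V × V | p.1 ∈ X₁ ∪ X₂ ∧ p.2 ∈ Y ∧ G.Adj p.1 p.2}
      = {p : V × V | p.1 ∈ X₁ ∧ p.2 ∈ Y ∧ G.Adj p.1 p.2}
        ∪ {p : V × V | p.1 ∈ X₂ ∧ p.2 ∈ Y ∧ G.Adj p.1 p.2} := by
    ext ⟨a, b⟩; by_cases ha : a ∈ X₁ <;> simp [ha, and_or_left] <;> tauto
  have hdisj : Disjoint {p : V × V | p.1 ∈ X₁ ∧ p.2 ∈ Y ∧ G.Adj p.1 p.2}
      {p : V × V | p.1 ∈ X₂ ∧ p.2 ∈ Y ∧ G.Adj p.1 p.2} := by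
    rw [Set.disjoint_left] at h ⊢
    rintro ⟨a, b⟩ ⟨h1, _⟩ ⟨h2, _⟩
    exact h h1 h2
  rw [hset, Set.ncard_union_eq hdisj (Set.toFinite _) (Set.toFinite _)]

lemma eB_biUnion {ι : Type*} (s : Finset ι) (X : ι → Set V) (Y : Set V)
    (h : ∀ i ∈ s, ∀ j ∈ s, i ≠ j → Disjoint (X i) (X j)) :
    eB G (⋃ i ∈ s, X i) Y = ∑ i ∈ s, eB G (X i) Y := by
  classical
  induction s using Finset.induction_on with
  | empty => simp [eB_empty]
  | @insert a s ha ih =>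
    rw [Finset.set_biUnion_insert, eB_union_left _ ?_, Finset.sum_insert ha,
      ih (fun i hi j hj hij => h i (by simp [hi]) j (by simp [hj]) hij)]
    exact Set.disjoint_iUnion₂_right.mpr fun i hi =>
      h a (by simp) i (by simp [hi]) (by rintro rfl; exact ha hi)

lemma eB_iUnion {ι : Type*} [Fintype ι] (X : ι → Set V) (Y : Set V)
    (h : Pairwise (Function.onFun Disjoint X)) :
    eB G (⋃ i, X i) Y = ∑ i, eB G (X i) Y := by
  have : (⋃ i, X i) = ⋃ i ∈ Finset.univ, X i := by simp
  rw [this, eB_biUnion _ _ _ _ (fun i _ j _ hij => h hij)]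

lemma eB_pos_of_mem {X Y : Set V} {a b : V} (ha : a ∈ X) (hb : b ∈ Y) (hadj : G.Adj a b) :
    1 ≤ eB G X Y := by
  have hmem : (⟨a, b⟩ : V × V) ∈ {p : V × V | p.1 ∈ X ∧ p.2 ∈ Y ∧ G.Adj p.1 p.2} := ⟨ha, hb, hadj⟩
  exact Set.ncard_pos (Set.toFinite _) |>.mpr ⟨_, hmem⟩

end Helpers

section Comp
variable (G : SimpleGraph V)


lemma reach_mono {U U' : Set V} (hU : U' ⊆ U) {a b : ↥U'}
    (h : (G.induce U').Reachable a b) :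
    (G.induce U).Reachable ⟨a, hU a.2⟩ ⟨b, hU b.2⟩ := by
  let f : G.induce U' →g G.induce U :=
    ⟨fun x => ⟨x, hU x.2⟩, fun {x y} hxy => hxy⟩
  exact h.map f

lemma reach_restrict {U U' : Set V} (hU : U' ⊆ U) :
    ∀ {a b : ↥U} (p : (G.induce U).Walk a b),
      (∀ x ∈ p.support, (x : V) ∈ U') →
      ∀ (ha : (a : V) ∈ U') (hb : (b : V) ∈ U'),
        (G.induce U').Reachable ⟨a, ha⟩ ⟨b, hb⟩ := by
  intro a b p
  induction p with
  | nil => intro _ ha hb; exact Reachable.refl _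
  | @cons x y z hadj q ih =>
    intro hp ha hb
    have hy : (y : V) ∈ U' := hp y (by simp)
    have hadj' : (G.induce U').Adj ⟨x, ha⟩ ⟨y, hy⟩ := hadj
    exact (hadj'.reachable).trans
      (ih (fun v hv => hp v (by simp [hv])) hy hb)

/-- key: if the old component of `v` avoids `u`, the new component (in `U \ {u}`)
has the same vertex set. -/
lemma compSupp_eq {U : Set V} {u v : V} (hu : u ∈ U) (hv' : v ∈ U \ {u})
    (hvu : (G.induce U).connectedComponentMk ⟨v, hv'.1⟩ ≠
           (G.induce U).connectedComponentMk ⟨u, hu⟩) :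
    compSupp G (U \ {u}) ((G.induce (U \ {u})).connectedComponentMk ⟨v, hv'⟩)
      = compSupp G U ((G.induce U).connectedComponentMk ⟨v, hv'.1⟩) := by
  classical
  have hv : v ∈ U := hv'.1
  have hsub : U \ {u} ⊆ U := Set.diff_subset
  ext x
  simp only [compSupp, Set.mem_image, ConnectedComponent.mem_supp_iff]
  constructor
  · rintro ⟨⟨x, hx⟩, hmk, rfl⟩
    refine ⟨⟨x, hsub hx⟩, ?_, rfl⟩
    have hr : (G.induce (U \ {u})).Reachable _ _ := ConnectedComponent.exact hmk
    exact ConnectedComponent.sound (reach_mono G hsub hr)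
  · rintro ⟨⟨x, hx⟩, hmk, rfl⟩
    have hr : (G.induce U).Reachable ⟨v, hv⟩ ⟨x, hx⟩ :=
      (ConnectedComponent.exact hmk).symm
    obtain ⟨p⟩ := hr
    have hall : ∀ y ∈ p.support, (y : V) ∈ U \ {u} := by
      intro y hy
      have hry : (G.induce U).Reachable ⟨v, hv⟩ y := ⟨p.takeUntil y hy⟩
      refine ⟨y.2, ?_⟩
      intro hyu
      apply hvu
      have : y = ⟨u, hu⟩ := Subtype.ext hyu
      rw [← this]
      exact ConnectedComponent.sound hry
    have hx' : x ∈ U \ {u} := hall _ p.end_mem_support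
    refine ⟨⟨x, hx'⟩, ?_, rfl⟩
    exact (ConnectedComponent.sound
      (reach_restrict G hsub p hall (hall _ p.start_mem_support) hx')).symm

end Comp

section Count
variable [Fintype V] (G : SimpleGraph V)

lemma finite_comp (U : Set V) : Finite ((G.induce U).ConnectedComponent) := by
  classical
  exact Quot.finite _

lemma compSupp_inj {U : Set V} {C D : (G.induce U).ConnectedComponent}
    (h : compSupp G U C = compSupp G U D) : C = D :=
  ConnectedComponent.supp_injective (Set.image_injective.mpr Subtype.val_injective h)

lemma mem_compSupp_mk {U : Set V} {v : V} (hv : v ∈ U) :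
    v ∈ compSupp G U ((G.induce U).connectedComponentMk ⟨v, hv⟩) :=
  ⟨⟨v, hv⟩, rfl, rfl⟩

lemma compSupp_subset {U : Set V} (C : (G.induce U).ConnectedComponent) :
    compSupp G U C ⊆ U := by
  rintro x ⟨y, _, rfl⟩; exact y.2

lemma compSupp_disjoint {U : Set V} {C D : (G.induce U).ConnectedComponent}
    (h : C ≠ D) : Disjoint (compSupp G U C) (compSupp G U D) :=
  Set.disjoint_image_of_injective Subtype.val_injective
    (SimpleGraph.pairwise_disjoint_supp_connectedComponent _ h)

lemma mk_eq_of_mem_compSupp {U : Set V} {C : (G.induce U).ConnectedComponent} {v : V}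
    (hv : v ∈ U) (h : v ∈ compSupp G U C) :
    (G.induce U).connectedComponentMk ⟨v, hv⟩ = C := by
  obtain ⟨⟨w, hw⟩, hmk, hval⟩ := h
  have hwv : (⟨w, hw⟩ : ↥U) = ⟨v, hv⟩ := Subtype.ext hval
  rw [← hwv]; exact hmk

lemma compSupp_mk_subset {U U' : Set V} (hU : U' ⊆ U) {v : V} (hv : v ∈ U') :
    compSupp G U' ((G.induce U').connectedComponentMk ⟨v, hv⟩)
      ⊆ compSupp G U ((G.induce U).connectedComponentMk ⟨v, hU hv⟩) := by
  rintro x ⟨⟨x, hx⟩, hmk, rfl⟩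
  have hr : (G.induce U').Reachable ⟨x, hx⟩ ⟨v, hv⟩ := ConnectedComponent.exact hmk
  exact ⟨⟨x, hU hx⟩, ConnectedComponent.sound (reach_mono G hU hr), rfl⟩

end Count

section Main
variable [Fintype V] (G : SimpleGraph V)

set_option maxHeartbeats 1000000 in
lemma card_odd_le {U : Set V} {u : V} (hu : u ∈ U) (B : Set V)
    (hH : Even (eB G
      (compSupp G U ((G.induce U).connectedComponentMk ⟨u, hu⟩)) B)) :
    Nat.card {C : (G.induce U).ConnectedComponent // Odd (eB G (compSupp G U C) B)}
        + (eB G {u} B) % 2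
      ≤ Nat.card {C : (G.induce (U \ {u})).ConnectedComponent //
          Odd (eB G (compSupp G (U \ {u}) C) B)} := by
  classical
  have : Finite ((G.induce U).ConnectedComponent) := finite_comp G U
  have : Finite ((G.induce (U \ {u})).ConnectedComponent) := finite_comp G _
  set H := (G.induce U).connectedComponentMk ⟨u, hu⟩ with hHdef
  -- every odd old component has a new companion with the same support
  have key : ∀ C : (G.induce U).ConnectedComponent,
      Odd (eB G (compSupp G U C) B) →
      ∃ C' : (G.induce (U \ {u})).ConnectedComponent,
        compSupp G (U \ {u}) C' = compSupp G U C := by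
    intro C hC
    have hCH : C ≠ H := by
      rintro rfl
      exact (Nat.not_even_iff_odd.mpr hC) hH
    obtain ⟨⟨v, hv⟩, hvC0⟩ := C.exists_rep
    have hvC : (G.induce U).connectedComponentMk ⟨v, hv⟩ = C := hvC0
    have hne : (G.induce U).connectedComponentMk ⟨v, hv⟩ ≠
        (G.induce U).connectedComponentMk ⟨u, hu⟩ := by rw [hvC]; exact hCH
    have hv' : v ∈ U \ {u} := ⟨hv, by rintro rfl; exact hne rfl⟩
    refine ⟨(G.induce (U \ {u})).connectedComponentMk ⟨v, hv'⟩, ?_⟩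
    rw [compSupp_eq G hu hv' hne, hvC]
  -- the injection
  let f : {C : (G.induce U).ConnectedComponent // Odd (eB G (compSupp G U C) B)} →
      {C : (G.induce (U \ {u})).ConnectedComponent //
        Odd (eB G (compSupp G (U \ {u}) C) B)} :=
    fun c => ⟨(key c.1 c.2).choose, by rw [(key c.1 c.2).choose_spec]; exact c.2⟩
  have hfsupp : ∀ c, compSupp G (U \ {u}) (f c).1 = compSupp G U c.1 :=
    fun c => (key c.1 c.2).choose_spec
  have hfinj : Function.Injective f := by
    intro c₁ c₂ h
    have : compSupp G U c₁.1 = compSupp G U c₂.1 := by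
      rw [← hfsupp c₁, ← hfsupp c₂, h]
    exact Subtype.ext (compSupp_inj G this)
  rcases Nat.even_or_odd (eB G {u} B) with hq | hq
  · rw [Nat.even_iff.mp hq, Nat.add_zero]
    exact Nat.card_le_card_of_injective f hfinj
  · rw [Nat.odd_iff.mp hq]
    -- find an extra odd new component inside (compSupp H) \ {u}
    have huH : u ∈ compSupp G U H := mem_compSupp_mk G hu
    set T : Set V := compSupp G U H \ {u} with hTdef
    have hTodd : Odd (eB G T B) := by
      have hsplit : compSupp G U H = T ∪ {u} := by
        rw [hTdef, Set.diff_union_self, Set.union_eq_self_of_subset_right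
          (Set.singleton_subset_iff.mpr huH)]
      have : eB G (compSupp G U H) B = eB G T B + eB G {u} B := by
        rw [hsplit, eB_union_left G (by simp [hTdef]) B]
      rw [Nat.odd_iff, Nat.even_iff] at *
      omega
    -- T is partitioned by the new components it contains
    have hTunion : T = ⋃ (i : {C' : (G.induce (U \ {u})).ConnectedComponent //
        compSupp G (U \ {u}) C' ⊆ T}), compSupp G (U \ {u}) i.1 := by
      apply Set.Subset.antisymm
      · intro x hx
        have hxU : x ∈ U := compSupp_subset G H hx.1
        have hxu : x ≠ u := hx.2
        have hxU' : x ∈ U \ {u} := ⟨hxU, hxu⟩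
        have hmkH : (G.induce U).connectedComponentMk ⟨x, hxU⟩ = H :=
          mk_eq_of_mem_compSupp G hxU hx.1
        have hsub : compSupp G (U \ {u})
            ((G.induce (U \ {u})).connectedComponentMk ⟨x, hxU'⟩) ⊆ T := by
          intro y hy
          have hyU' : y ∈ U \ {u} := compSupp_subset G _ hy
          have : y ∈ compSupp G U ((G.induce U).connectedComponentMk ⟨x, hxU⟩) :=
            compSupp_mk_subset G Set.diff_subset hxU' hy
          exact ⟨hmkH ▸ this, hyU'.2⟩
        exact Set.mem_iUnion.mpr ⟨⟨_, hsub⟩, mem_compSupp_mk G hxU'⟩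
      · exact Set.iUnion_subset fun i => i.2
    have hsum : eB G T B = ∑ i : {C' : (G.induce (U \ {u})).ConnectedComponent //
        compSupp G (U \ {u}) C' ⊆ T}, eB G (compSupp G (U \ {u}) i.1) B := by
      have hdisj : Pairwise (Function.onFun Disjoint
          (fun i : {C' : (G.induce (U \ {u})).ConnectedComponent //
            compSupp G (U \ {u}) C' ⊆ T} => compSupp G (U \ {u}) i.1)) :=
        fun i j hij => compSupp_disjoint G (fun h => hij (Subtype.ext h))
      have h2 := eB_iUnion G (fun i : {C' : (G.induce (U \ {u})).ConnectedComponent //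
            compSupp G (U \ {u}) C' ⊆ T} => compSupp G (U \ {u}) i.1) B hdisj
      rw [← hTunion] at h2
      exact h2
    obtain ⟨i₀, hi₀⟩ : ∃ i : {C' : (G.induce (U \ {u})).ConnectedComponent //
        compSupp G (U \ {u}) C' ⊆ T}, Odd (eB G (compSupp G (U \ {u}) i.1) B) := by
      by_contra hcon
      push_neg at hcon
      simp only [Nat.not_odd_iff_even] at hcon
      rw [← Nat.not_even_iff_odd] at hTodd
      exact hTodd (hsum ▸ Finset.even_sum _ (fun i _ => hcon i))
    -- extend the injection by i₀
    let g : Option {C : (G.induce U).ConnectedComponent //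
        Odd (eB G (compSupp G U C) B)} →
        {C : (G.induce (U \ {u})).ConnectedComponent //
          Odd (eB G (compSupp G (U \ {u}) C) B)} :=
      fun o => o.elim ⟨i₀.1, hi₀⟩ f
    have hnew : ∀ c, f c ≠ ⟨i₀.1, hi₀⟩ := by
      intro c hc
      have hCH : c.1 ≠ H := by
        rintro h
        exact (Nat.not_even_iff_odd.mpr c.2) (h ▸ hH)
      obtain ⟨⟨v, hv⟩, hvC0⟩ := c.1.exists_rep
      have hvC : (G.induce U).connectedComponentMk ⟨v, hv⟩ = c.1 := hvC0
      have hvmem : v ∈ compSupp G U c.1 := by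
        rw [← hvC]; exact mem_compSupp_mk G hv
      have : v ∈ compSupp G U H := by
        have h1 : compSupp G (U \ {u}) (f c).1 ⊆ T := by
          rw [hc]; exact i₀.2
        have h2 : v ∈ compSupp G (U \ {u}) (f c).1 := by rw [hfsupp c]; exact hvmem
        exact (h1 h2).1
      exact (Set.disjoint_left.mp (compSupp_disjoint G hCH) hvmem) this
    have hginj : Function.Injective g := by
      intro o₁ o₂ h
      match o₁, o₂ with
      | none, none => rfl
      | none, some c => exact absurd h.symm (hnew c)
      | some c, none => exact absurd h (hnew c)
      | some c₁, some c₂ => exact congrArg some (hfinj h)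
    have := Nat.card_le_card_of_injective g hginj
    rwa [Finite.card_option] at this

end Main

set_option maxHeartbeats 1000000 in
theorem stmt5 {V : Type*} [Fintype V] (G : SimpleGraph V) (A B : Set V)
    (hG : ¬ HasTwoFactor G) (hAB : IsBiasedBarrier G A B)
    (C : (G.induce (A ∪ B)ᶜ).ConnectedComponent)
    (heven : Even (eB G (compSupp G (A ∪ B)ᶜ C) B)) :
    eB G (compSupp G (A ∪ B)ᶜ C) B = 0 := by
    classical
  by_contra hne
  obtain ⟨⟨u, b⟩, huC, hbB, hadj⟩ :
      ∃ p : V × V, p.1 ∈ compSupp G (A ∪ B)ᶜ C ∧ p.2 ∈ B ∧ G.Adj p.1 p.2 := by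
    have hne' : {p : V × V | p.1 ∈ compSupp G (A ∪ B)ᶜ C ∧ p.2 ∈ B ∧ G.Adj p.1 p.2}.Nonempty := by
      rw [Set.nonempty_iff_ne_empty]
      intro h
      exact hne (by unfold eB; rw [h]; exact Set.ncard_empty _)
    obtain ⟨p, hp⟩ := hne'
    exact ⟨p, hp⟩
  have huU : u ∈ (A ∪ B)ᶜ := compSupp_subset G C huC
  have huA : u ∉ A := fun h => huU (Or.inl h)
  have huB : u ∉ B := fun h => huU (Or.inr h)
  have hmkC : (G.induce (A ∪ B)ᶜ).connectedComponentMk ⟨u, huU⟩ = C :=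
    mk_eq_of_mem_compSupp G huU huC
  set A' : Set V := A ∪ {u} with hA'def
  have hU' : (A' ∪ B)ᶜ = (A ∪ B)ᶜ \ {u} := by
    rw [hA'def]
    ext x
    simp only [Set.mem_compl_iff, Set.mem_union, Set.mem_diff, Set.mem_singleton_iff]
    tauto
  have hA'card : A'.ncard = A.ncard + 1 := by
    rw [hA'def, Set.union_singleton, Set.ncard_insert_of_notMem huA A.toFinite]
  set q : ℕ := eB G {u} B with hqdef
  have hq1 : 1 ≤ q := eB_pos_of_mem G rfl hbB hadj
  have hcount := card_odd_le G huU B (by rw [hmkC]; exact heven)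
  have hsplit : eB G B Aᶜ = eB G B A'ᶜ + q := by
    have hAc : Aᶜ = A'ᶜ ∪ {u} := by
      rw [hA'def]
      ext x
      simp only [Set.mem_compl_iff, Set.mem_union, Set.mem_singleton_iff]
      by_cases hx : x = u
      · subst hx; tauto
      · tauto
    have hdisj : Disjoint (A'ᶜ : Set V) {u} := by
      rw [Set.disjoint_singleton_right, hA'def]
      simp
    rw [eB_swap G B Aᶜ, hAc, eB_union_left G hdisj B, eB_swap G A'ᶜ B]
  have hdelta' : deltaAB G A' B ≤ deltaAB G A B := by
    unfold deltaAB
    rw [hU', hA'card, hsplit]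
    push_cast
    rcases Nat.even_or_odd q with hq | hq
    · rw [Nat.even_iff] at hq
      rw [show q % 2 = 0 from hq] at hcount
      omega
    · rw [Nat.odd_iff] at hq
      rw [show q % 2 = 1 from hq] at hcount
      omega
  have hbar' : IsBarrier G A' B := by
    refine ⟨?_, hdelta'.trans hAB.1.2⟩
    rw [hA'def, Set.union_singleton, Set.disjoint_left]
    intro a ha
    rcases ha with rfl | ha
    · exact huB
    · exact Set.disjoint_left.mp hAB.1.1 ha
  have hle := (hAB.2 A' B hbar').1
  omega
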